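/- For a diagonal matrix a = diag(a_1,...,a_n) in SL_n(R) with positive entries, the supremum over 1 ≤ j ≤ n of the operator norms ||∧^j a^{-1}||_op equals the supremum over all j and all index sets 1 ≤ i_1 < ... < i_j ≤ n of 1/(a_{i_1}···a_{i_j}), and this equals α(aZ^n). -/

import Mathlib

open scoped Matrix

open Matrix Finset Equiv Equiv.Perm

open scoped Classical in
/-- The finset of strictly monotone maps `Fin j → Fin n`. -/
noncomputable def msetSM (n j : ℕ) : Finset (Fin j → Fin n) :=
  Finset.univ.filter StrictMono

local notation "ε " σ:arg => ((Equiv.Perm.sign σ : ℤ) : ℝ)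

/-- Weighted Cauchy–Binet / Gram determinant expansion. -/
theorem weighted_gram_det {n j : ℕ} (w : Fin n → ℝ) (v : Fin j → Fin n → ℝ) :
    (Matrix.of fun a b => ∑ i, w i * (v a i * v b i)).det
      = ∑ g ∈ msetSM n j, (∏ x, w (g x)) * (Matrix.of fun a b => v a (g b)).det ^ 2 := by
  classical
  have step1 : (Matrix.of fun a b => ∑ i, w i * (v a i * v b i)).det
      = ∑ p : Fin j → Fin n, (∏ x, w (p x) * v x (p x)) *
          (Matrix.of fun a b => v a (p b)).det := by
    rw [det_apply']
    simp only [of_apply]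
    calc ∑ σ : Perm (Fin j), ε σ * ∏ x, ∑ i, w i * (v (σ x) i * v x i)
        = ∑ σ : Perm (Fin j), ε σ * ∑ p : Fin j → Fin n,
            ∏ x, w (p x) * (v (σ x) (p x) * v x (p x)) := by
          simp only [prod_univ_sum, Fintype.piFinset_univ]
      _ = ∑ σ : Perm (Fin j), ∑ p : Fin j → Fin n,
            ε σ * ∏ x, w (p x) * (v (σ x) (p x) * v x (p x)) := by
          simp only [mul_sum]
      _ = ∑ p : Fin j → Fin n, ∑ σ : Perm (Fin j),
            ε σ * ∏ x, w (p x) * (v (σ x) (p x) * v x (p x)) := Finset.sum_comm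
      _ = ∑ p : Fin j → Fin n, (∏ x, w (p x) * v x (p x)) *
            (Matrix.of fun a b => v a (p b)).det := by
          refine Finset.sum_congr rfl fun p _ => ?_
          rw [det_apply']
          simp only [of_apply, Finset.mul_sum]
          refine Finset.sum_congr rfl fun σ _ => ?_
          simp only [Finset.prod_mul_distrib]
          ring
  rw [step1]
  set F : (Fin j → Fin n) → ℝ := fun p =>
    (∏ x, w (p x) * v x (p x)) * (Matrix.of fun a b => v a (p b)).det with hF
  have step2 : ∑ p : Fin j → Fin n, F p
      = ∑ p ∈ Finset.univ.filter (fun p => Function.Injective p), F p := by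
    symm
    refine Finset.sum_subset (Finset.filter_subset _ _) fun p _ hp => ?_
    rw [Finset.mem_filter, not_and] at hp
    have hpi := hp (Finset.mem_univ p)
    rw [Function.not_injective_iff] at hpi
    obtain ⟨b, c, hbc, hne⟩ := hpi
    have : (Matrix.of fun a b => v a (p b)).det = 0 :=
      Matrix.det_zero_of_column_eq hne fun k => by simp [hbc]
    simp [hF, this]
  rw [step2]
  have step3 : ∑ p ∈ Finset.univ.filter (fun p => Function.Injective p), F p
      = ∑ qσ ∈ (msetSM n j) ×ˢ (Finset.univ : Finset (Perm (Fin j))),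
          F (qσ.1 ∘ qσ.2) := by
    refine Finset.sum_nbij' (fun p => (p ∘ Tuple.sort p, (Tuple.sort p)⁻¹))
      (fun qσ => qσ.1 ∘ qσ.2) ?_ ?_ ?_ ?_ ?_
    · intro p hp
      rw [Finset.mem_filter] at hp
      rw [Finset.mem_product]
      refine ⟨?_, Finset.mem_univ _⟩
      rw [msetSM, Finset.mem_filter]
      exact ⟨Finset.mem_univ _,
        (Tuple.monotone_sort p).strictMono_of_injective
          (hp.2.comp (Tuple.sort p).injective)⟩
    · intro qσ hqσ
      rw [Finset.mem_product, msetSM, Finset.mem_filter] at hqσ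
      rw [Finset.mem_filter]
      exact ⟨Finset.mem_univ _, hqσ.1.2.injective.comp (Equiv.injective _)⟩
    · intro p _
      funext x
      simp [Function.comp]
    · intro qσ hqσ
      rw [Finset.mem_product, msetSM, Finset.mem_filter] at hqσ
      obtain ⟨⟨-, hq⟩, -⟩ := hqσ
      obtain ⟨q, σ⟩ := qσ
      have h1 : (q ∘ σ) ∘ Tuple.sort (q ∘ σ) = q := by
        rw [Tuple.comp_perm_comp_sort_eq_comp_sort,
          Tuple.sort_eq_refl_iff_monotone.2 hq.monotone]
        rfl
      have h2 : (σ : Fin j → Fin j) ∘ (Tuple.sort (q ∘ σ) : Fin j → Fin j) = id := by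
        have := h1
        rw [Function.comp_assoc] at this
        funext x
        exact hq.injective (congrFun this x)
      have h3 : Tuple.sort (q ∘ σ) = σ⁻¹ := by
        ext x
        have := congrFun h2 x
        simp only [Function.comp, id] at this
        exact congrArg Fin.val ((Equiv.eq_symm_apply σ).2 this)
      simp only [Prod.mk.injEq]
      exact ⟨h1, by rw [h3, inv_inv]⟩
    · intro p hp
      congr 1
      funext x
      simp [Function.comp]
  rw [step3, Finset.sum_product]
  refine Finset.sum_congr rfl fun q hq => ?_
  rw [msetSM, Finset.mem_filter] at hq
  have hq' := hq.2
  set N : Matrix (Fin j) (Fin j) ℝ := Matrix.of fun a b => v a (q b) with hN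
  have key : ∀ σ : Perm (Fin j),
      F (q ∘ σ) = (∏ x, w (q x)) * ((ε σ * ∏ x, v x (q (σ x))) * N.det) := by
    intro σ
    have hdet : (Matrix.of fun a b => v a (q (σ b))).det = ε σ * N.det := by
      have : (Matrix.of fun a b => v a (q (σ b))) = N.submatrix id σ := rfl
      rw [this, Matrix.det_permute']
      try simp
    have hw : ∏ x, w (q (σ x)) = ∏ x, w (q x) := Equiv.prod_comp σ fun x => w (q x)
    simp only [hF, Function.comp, hdet]
    rw [Finset.prod_mul_distrib, hw]
    try ring
  rw [Finset.sum_congr rfl fun σ _ => key σ, ← Finset.mul_sum, ← Finset.sum_mul]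
  have : ∑ σ : Perm (Fin j), ε σ * ∏ x, v x (q (σ x)) = N.det := by
    rw [← Matrix.det_transpose, Matrix.det_apply']
    rfl
  rw [this]
  ring



/-- The Euclidean norm of the wedge product `v 0 ∧ ⋯ ∧ v (i-1)` of vectors in `ℝ^n`,
computed as the square root of the Gram determinant. -/
noncomputable def wedgeNorm {n i : ℕ} (v : Fin i → (Fin n → ℝ)) : ℝ :=
  Real.sqrt (Matrix.det (Matrix.of fun a b => v a ⬝ᵥ v b))

/-- The lattice `g ℤ^n` as a set of vectors in `ℝ^n`. -/
def latticeSet {n : ℕ} (g : Matrix (Fin n) (Fin n) ℝ) : Set (Fin n → ℝ) :=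
  {x | ∃ m : Fin n → ℤ, x = g.mulVec fun j => (m j : ℝ)}

/-- The Margulis height function `α(g ℤ^n)`: the supremum of `‖v₁ ∧ ⋯ ∧ v_i‖⁻¹` over all
nonzero wedge products (equivalently, linearly independent tuples) of lattice vectors,
`1 ≤ i ≤ n`. -/
noncomputable def alphaFn {n : ℕ} (g : Matrix (Fin n) (Fin n) ℝ) : ℝ :=
  sSup {r : ℝ | ∃ i : ℕ, 1 ≤ i ∧ i ≤ n ∧ ∃ v : Fin i → (Fin n → ℝ),
    (∀ a, v a ∈ latticeSet g) ∧ LinearIndependent ℝ v ∧ r = (wedgeNorm v)⁻¹}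

/-- The operator norm of the `j`-th exterior power `∧^j A`, expressed as the supremum of the
norms of images of unit decomposable `j`-vectors (for invertible `A` this supremum equals the
genuine operator norm of `∧^j A`, being attained at a wedge of singular vectors). -/
noncomputable def extOpNorm {n : ℕ} (j : ℕ) (A : Matrix (Fin n) (Fin n) ℝ) : ℝ :=
  sSup {r : ℝ | ∃ v : Fin j → (Fin n → ℝ), wedgeNorm v = 1 ∧
    r = wedgeNorm (fun a => A.mulVec (v a))}

theorem gram_det_eq_sum {n j : ℕ} (v : Fin j → Fin n → ℝ) :
    (Matrix.of fun a b => v a ⬝ᵥ v b).det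
      = ∑ g ∈ msetSM n j, (Matrix.of fun a b => v a (g b)).det ^ 2 := by
  rw [show (Matrix.of fun a b => v a ⬝ᵥ v b)
      = Matrix.of fun a b => ∑ i, (1:ℝ) * (v a i * v b i) by
    ext a b; simp [dotProduct]]
  rw [weighted_gram_det]
  simp

theorem wedge_sq {n j : ℕ} (v : Fin j → Fin n → ℝ) :
    wedgeNorm v = Real.sqrt (∑ g ∈ msetSM n j, (Matrix.of fun a b => v a (g b)).det ^ 2) := by
  rw [wedgeNorm, gram_det_eq_sum]

theorem wedge_diag_sq {n j : ℕ} (d : Fin n → ℝ) (v : Fin j → Fin n → ℝ) :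
    wedgeNorm (fun a => (Matrix.diagonal d).mulVec (v a))
      = Real.sqrt (∑ g ∈ msetSM n j,
          (∏ x, d (g x)) ^ 2 * (Matrix.of fun a b => v a (g b)).det ^ 2) := by
  rw [wedgeNorm]
  rw [show (Matrix.of fun a b =>
        (Matrix.diagonal d).mulVec (v a) ⬝ᵥ (Matrix.diagonal d).mulVec (v b))
      = Matrix.of fun a b => ∑ i, (d i ^ 2) * (v a i * v b i) by
    ext a b
    simp only [Matrix.of_apply, dotProduct, Matrix.mulVec_diagonal]
    exact Finset.sum_congr rfl fun i _ => by ring]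
  rw [weighted_gram_det (fun i => d i ^ 2) v]
  congr 1
  exact Finset.sum_congr rfl fun g _ => by rw [Finset.prod_pow]

theorem wedge_single {n j : ℕ} {g : Fin j → Fin n} (hg : Function.Injective g)
    (c : Fin j → ℝ) (hc : ∀ x, 0 ≤ c x) :
    wedgeNorm (fun a => fun i => if i = g a then c a else 0) = ∏ x, c x := by
  classical
  have hGram : (Matrix.of fun a b =>
      (fun i => if i = g a then c a else 0) ⬝ᵥ (fun i => if i = g b then c b else 0))
      = Matrix.diagonal (fun a => c a ^ 2) := by
    ext a b
    simp only [Matrix.of_apply, dotProduct]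
    have hsum : (∑ i, (if i = g a then c a else 0) * (if i = g b then c b else 0))
        = if g a = g b then c a * c b else 0 := by
      rw [Finset.sum_eq_single (g a)]
      · by_cases h : g a = g b <;> simp [h]
      · intro i _ hi; simp [hi]
      · intro h; exact absurd (Finset.mem_univ _) h
    rw [hsum]
    by_cases hab : a = b
    · subst hab; simp [Matrix.diagonal]; ring
    · have : g a ≠ g b := fun h => hab (hg h)
      simp [Matrix.diagonal, hab, this]
  rw [wedgeNorm, hGram, Matrix.det_diagonal, Finset.prod_pow,
    Real.sqrt_sq (Finset.prod_nonneg fun x _ => hc x)]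

theorem gram_det_ne_zero {n j : ℕ} {v : Fin j → Fin n → ℝ}
    (hv : LinearIndependent ℝ v) :
    (Matrix.of fun a b => v a ⬝ᵥ v b).det ≠ 0 := by
  classical
  intro h
  set M : Matrix (Fin n) (Fin j) ℝ := Matrix.of fun i a => v a i with hM
  have hg : (Matrix.of fun a b => v a ⬝ᵥ v b) = Mᵀ * M := by
    ext a b; simp [Matrix.mul_apply, dotProduct, hM]
  rw [hg] at h
  obtain ⟨x, hx0, hx⟩ := (Matrix.exists_mulVec_eq_zero_iff).2 h
  have hker : M.mulVec x = 0 := by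
    have hmem : x ∈ LinearMap.ker (Mᵀ * M).mulVecLin := by
      rw [LinearMap.mem_ker, Matrix.mulVecLin_apply]; exact hx
    rw [Matrix.ker_mulVecLin_transpose_mul_self] at hmem
    simpa [Matrix.mulVecLin_apply] using hmem
  have hsum : ∑ b, x b • v b = 0 := by
    funext i
    have := congrFun hker i
    simp only [Matrix.mulVec, dotProduct, hM, Matrix.of_apply, Pi.zero_apply] at this
    simpa [Finset.sum_apply, mul_comm] using this
  exact hx0 (funext fun b => Fintype.linearIndependent_iff.1 hv x hsum b)

/-- for a diagonal `a = diag(a₁,…,a_n) ∈ SL_n(ℝ)` with positive entries,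
`sup_{1 ≤ j ≤ n} ‖∧^j a⁻¹‖_op = sup_{∅ ≠ I ⊆ {1,…,n}} (∏_{i ∈ I} a_i)⁻¹ = α(a ℤ^n)`. -/
theorem diagonal_extOpNorm_eq_alpha {n : ℕ} (hn : 1 ≤ n)
    (a : Fin n → ℝ) (hpos : ∀ i, 0 < a i) (hdet : ∏ i, a i = 1) :
    sSup {r : ℝ | ∃ j : ℕ, 1 ≤ j ∧ j ≤ n ∧ r = extOpNorm j (Matrix.diagonal a)⁻¹} =
      sSup {r : ℝ | ∃ s : Finset (Fin n), s.Nonempty ∧ r = (∏ i ∈ s, a i)⁻¹} ∧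
    sSup {r : ℝ | ∃ s : Finset (Fin n), s.Nonempty ∧ r = (∏ i ∈ s, a i)⁻¹} =
      alphaFn (Matrix.diagonal a) := by
  classical
  set d : Fin n → ℝ := fun i => (a i)⁻¹ with hd_def
  have hdpos : ∀ i, 0 < d i := fun i => inv_pos.2 (hpos i)
  have hdinv : (Matrix.diagonal a)⁻¹ = Matrix.diagonal d := by
    apply Matrix.inv_eq_right_inv
    rw [Matrix.diagonal_mul_diagonal]
    have : (fun i => a i * d i) = fun _ => (1:ℝ) :=
      funext fun i => mul_inv_cancel₀ (hpos i).ne'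
    rw [this, Matrix.diagonal_one]
  set S : Set ℝ := {r : ℝ | ∃ s : Finset (Fin n), s.Nonempty ∧ r = (∏ i ∈ s, a i)⁻¹}
    with hS_def
  have hSfin : S.Finite :=
    (Set.finite_range fun s : Finset (Fin n) => (∏ i ∈ s, a i)⁻¹).subset
      (by rintro r ⟨s, -, rfl⟩; exact ⟨s, rfl⟩)
  have hSbdd : BddAbove S := hSfin.bddAbove
  have hSne : S.Nonempty :=
    ⟨(∏ i ∈ (Finset.univ : Finset (Fin n)), a i)⁻¹, Finset.univ,
      ⟨⟨0, hn⟩, Finset.mem_univ _⟩, rfl⟩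
  have hSpos : ∀ r ∈ S, 0 < r := by
    rintro r ⟨s, -, rfl⟩
    exact inv_pos.2 (Finset.prod_pos fun i _ => hpos i)
  set C := sSup S with hC_def
  have hCpos : 0 < C := by
    obtain ⟨r, hr⟩ := hSne
    exact lt_of_lt_of_le (hSpos r hr) (le_csSup hSbdd hr)
  have hprod : ∀ {j : ℕ} (g : Fin j → Fin n), Function.Injective g →
      (∏ x, d (g x)) = (∏ i ∈ Finset.univ.image g, a i)⁻¹ := by
    intro j g hg
    rw [Finset.prod_image (fun x _ y _ h => hg h), hd_def]
    exact Finset.prod_inv_distrib (f := fun x => a (g x))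
  have hmemS : ∀ {j : ℕ} (g : Fin j → Fin n), Function.Injective g → 0 < j →
      (∏ x, d (g x)) ∈ S := by
    intro j g hg hj
    exact ⟨Finset.univ.image g,
      ⟨g ⟨0, hj⟩, Finset.mem_image_of_mem g (Finset.mem_univ _)⟩, hprod g hg⟩
  have hleC : ∀ {j : ℕ} (g : Fin j → Fin n), Function.Injective g → 0 < j →
      (∏ x, d (g x)) ≤ C := fun g hg hj => le_csSup hSbdd (hmemS g hg hj)
  -- the image of a "scaled basis" tuple under a diagonal matrix
  have hvd : ∀ {j : ℕ} (e : Fin n → ℝ) (g : Fin j → Fin n) (x : Fin j),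
      (Matrix.diagonal e).mulVec (fun i => if i = g x then (1:ℝ) else 0)
        = fun i => if i = g x then e (g x) else 0 := by
    intro j e g x
    funext i
    rw [Matrix.mulVec_diagonal]
    by_cases h : i = g x
    · subst h; simp
    · simp [h]
  have hv1 : ∀ {j : ℕ} (g : Fin j → Fin n), Function.Injective g →
      wedgeNorm (fun x => fun i => if i = g x then (1:ℝ) else 0) = 1 := by
    intro j g hg
    rw [wedge_single hg _ (fun _ => zero_le_one)]
    simp
  -- PART 1 machinery
  have hEub : ∀ (j : ℕ), 1 ≤ j → ∀ r ∈ {r : ℝ | ∃ v : Fin j → (Fin n → ℝ),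
      wedgeNorm v = 1 ∧ r = wedgeNorm (fun x => (Matrix.diagonal d).mulVec (v x))},
      r ≤ C := by
    rintro j hj1 r ⟨v, hv, rfl⟩
    rw [wedge_diag_sq]
    have h1 : ∑ g ∈ msetSM n j, (Matrix.of fun x b => v x (g b)).det ^ 2 = 1 :=
      Real.sqrt_eq_one.1 (by rw [← wedge_sq]; exact hv)
    have hle : ∑ g ∈ msetSM n j,
        (∏ x, d (g x)) ^ 2 * (Matrix.of fun x b => v x (g b)).det ^ 2 ≤ C ^ 2 := by
      calc ∑ g ∈ msetSM n j,
            (∏ x, d (g x)) ^ 2 * (Matrix.of fun x b => v x (g b)).det ^ 2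
          ≤ ∑ g ∈ msetSM n j, C ^ 2 * (Matrix.of fun x b => v x (g b)).det ^ 2 := by
            refine Finset.sum_le_sum fun g hg => ?_
            refine mul_le_mul_of_nonneg_right ?_ (sq_nonneg _)
            have hgsm : StrictMono g := by
              rw [msetSM, Finset.mem_filter] at hg; exact hg.2
            have h0 : 0 < ∏ x, d (g x) := Finset.prod_pos fun x _ => hdpos _
            exact pow_le_pow_left₀ h0.le (hleC g hgsm.injective hj1) 2
        _ = C ^ 2 := by rw [← Finset.mul_sum, h1, mul_one]
    exact (Real.sqrt_le_sqrt hle).trans_eq (Real.sqrt_sq hCpos.le)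
  have hEmem : ∀ (j : ℕ) (g : Fin j → Fin n), StrictMono g →
      (∏ x, d (g x)) ∈ {r : ℝ | ∃ v : Fin j → (Fin n → ℝ),
        wedgeNorm v = 1 ∧ r = wedgeNorm (fun x => (Matrix.diagonal d).mulVec (v x))} := by
    intro j g hg
    refine ⟨fun x => fun i => if i = g x then (1:ℝ) else 0, hv1 g hg.injective, ?_⟩
    rw [show (fun x => (Matrix.diagonal d).mulVec fun i => if i = g x then (1:ℝ) else 0)
        = fun x => fun i => if i = g x then d (g x) else 0 from funext fun x => hvd d g x]
    rw [wedge_single hg.injective _ fun x => (hdpos _).le]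
  have hcast_sm : ∀ {j : ℕ} (h : j ≤ n), StrictMono (fun x : Fin j => Fin.castLE h x) := by
    intro j hjn x y h
    exact h
  have hEle : ∀ j, 1 ≤ j → j ≤ n → extOpNorm j (Matrix.diagonal d) ≤ C := by
    intro j hj1 hjn
    exact csSup_le ⟨_, hEmem j _ (hcast_sm hjn)⟩ (hEub j hj1)
  have hEge : ∀ (j : ℕ) (g : Fin j → Fin n), 1 ≤ j → StrictMono g →
      (∏ x, d (g x)) ≤ extOpNorm j (Matrix.diagonal d) := by
    intro j g hj1 hg
    exact le_csSup ⟨C, fun r hr => hEub j hj1 r hr⟩ (hEmem j g hg)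
  constructor
  · -- first equality
    rw [show {r : ℝ | ∃ j : ℕ, 1 ≤ j ∧ j ≤ n ∧ r = extOpNorm j (Matrix.diagonal a)⁻¹}
        = {r : ℝ | ∃ j : ℕ, 1 ≤ j ∧ j ≤ n ∧ r = extOpNorm j (Matrix.diagonal d)} from by
      rw [hdinv]]
    have hTbdd : BddAbove {r : ℝ | ∃ j : ℕ, 1 ≤ j ∧ j ≤ n ∧
        r = extOpNorm j (Matrix.diagonal d)} := by
      refine ⟨C, ?_⟩
      rintro r ⟨j, hj1, hjn, rfl⟩
      exact hEle j hj1 hjn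
    apply le_antisymm
    · refine csSup_le ⟨extOpNorm 1 (Matrix.diagonal d), ⟨1, le_refl 1, hn, rfl⟩⟩ ?_
      rintro r ⟨j, hj1, hjn, rfl⟩
      exact hEle j hj1 hjn
    · apply csSup_le hSne
      rintro r ⟨s, hs, rfl⟩
      have hj1 : 1 ≤ s.card := Finset.card_pos.2 hs
      have hjn : s.card ≤ n := by simpa using Finset.card_le_univ s
      set g := s.orderEmbOfFin (rfl : s.card = s.card) with hg_def
      have himg : Finset.univ.image (⇑g) = s := by
        apply Finset.coe_injective
        rw [Finset.coe_image, Finset.coe_univ, Set.image_univ,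
          Finset.range_orderEmbOfFin]
      have hr : (∏ i ∈ s, a i)⁻¹ = ∏ x, d (g x) := by
        rw [hprod _ g.injective, himg]
      rw [hr]
      exact le_trans (hEge s.card g hj1 g.strictMono)
        (le_csSup hTbdd ⟨s.card, hj1, hjn, rfl⟩)
  · -- second equality
    rw [alphaFn]
    set A : Set ℝ := {r : ℝ | ∃ i : ℕ, 1 ≤ i ∧ i ≤ n ∧ ∃ v : Fin i → (Fin n → ℝ),
      (∀ x, v x ∈ latticeSet (Matrix.diagonal a)) ∧ LinearIndependent ℝ v ∧
      r = (wedgeNorm v)⁻¹} with hA_def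
    have hSsubA : S ⊆ A := by
      rintro r ⟨s, hs, rfl⟩
      have hj1 : 1 ≤ s.card := Finset.card_pos.2 hs
      have hjn : s.card ≤ n := by simpa using Finset.card_le_univ s
      set g := s.orderEmbOfFin (rfl : s.card = s.card) with hg_def
      have himg : Finset.univ.image (⇑g) = s := by
        apply Finset.coe_injective
        rw [Finset.coe_image, Finset.coe_univ, Set.image_univ,
          Finset.range_orderEmbOfFin]
      refine ⟨s.card, hj1, hjn,
        fun x => fun i => if i = g x then a (g x) else 0, ?_, ?_, ?_⟩
      · intro x
        refine ⟨fun i => if i = g x then (1:ℤ) else 0, ?_⟩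
        rw [show (fun i => ((if i = g x then (1:ℤ) else 0 : ℤ) : ℝ))
            = fun i => if i = g x then (1:ℝ) else 0 from
          funext fun i => by split_ifs <;> simp]
        exact (hvd a g x).symm
      · rw [Fintype.linearIndependent_iff]
        intro cc hcc x
        have hcx := congrFun hcc (g x)
        simp only [Finset.sum_apply, Pi.smul_apply, smul_eq_mul, Pi.zero_apply] at hcx
        rw [Finset.sum_eq_single x] at hcx
        · simp only [if_pos rfl] at hcx
          exact (mul_eq_zero.1 hcx).resolve_right (hpos (g x)).ne'
        · intro b _ hb
          have : g x ≠ g b := fun h => hb (g.injective h).symm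
          simp [this]
        · intro h; exact absurd (Finset.mem_univ _) h
      · rw [wedge_single g.injective _ fun x => (hpos _).le]
        congr 1
        rw [← Finset.prod_image (fun x _ y _ h => g.injective h), himg]
    have hAub : ∀ r ∈ A, r ≤ C := by
      rintro r ⟨j, hj1, hjn, v, hlat, hli, rfl⟩
      choose m hm using hlat
      set mr : Fin j → Fin n → ℝ := fun x k => ((m x k : ℤ) : ℝ) with hmr_def
      have hveq : v = fun x => (Matrix.diagonal a).mulVec (mr x) := funext fun x => hm x
      have hlim : LinearIndependent ℝ mr := by
        apply LinearIndependent.of_comp (Matrix.diagonal a).mulVecLin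
        have hco : (⇑(Matrix.diagonal a).mulVecLin ∘ mr) = v := by
          funext x
          rw [Function.comp_apply, Matrix.mulVecLin_apply, hveq]
        rw [hco]; exact hli
      obtain ⟨g₀, hg₀mem, hg₀⟩ :
          ∃ g₀ ∈ msetSM n j, (Matrix.of fun x b => mr x (g₀ b)).det ≠ 0 := by
        by_contra hcon
        push_neg at hcon
        apply gram_det_ne_zero hlim
        rw [gram_det_eq_sum]
        exact Finset.sum_eq_zero fun g hg => by rw [hcon g hg]; ring
      have hg₀sm : StrictMono g₀ := by
        rw [msetSM, Finset.mem_filter] at hg₀mem; exact hg₀mem.2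
      have hint : (1:ℝ) ≤ (Matrix.of fun x b => mr x (g₀ b)).det ^ 2 := by
        set z : ℤ := (Matrix.of fun x b => m x (g₀ b)).det with hz_def
        have hmap : (Matrix.of fun x b => mr x (g₀ b))
            = (Matrix.of fun x b => m x (g₀ b)).map (Int.castRingHom ℝ) := by
          ext x b; simp [hmr_def]
        have hcast : (Matrix.of fun x b => mr x (g₀ b)).det = (z : ℝ) := by
          rw [hmap, ← RingHom.mapMatrix_apply, ← RingHom.map_det]
          simp [hz_def]
        have hz0 : z ≠ 0 := by
          intro h0; apply hg₀; rw [hcast, h0]; simp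
        rw [hcast]
        have h1z : (1:ℤ) ≤ z ^ 2 := by
          nlinarith [Int.one_le_abs hz0, sq_abs z, abs_nonneg z]
        exact_mod_cast h1z
      set B := ∏ x, a (g₀ x) with hB_def
      have hBpos : 0 < B := Finset.prod_pos fun x _ => hpos _
      have hWge : B ≤ wedgeNorm v := by
        rw [hveq, wedge_diag_sq]
        have hterm : B ^ 2 ≤ (∏ x, a (g₀ x)) ^ 2 *
            (Matrix.of fun x b => mr x (g₀ b)).det ^ 2 := by
          calc B ^ 2 = B ^ 2 * 1 := (mul_one _).symm
            _ ≤ B ^ 2 * (Matrix.of fun x b => mr x (g₀ b)).det ^ 2 :=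
              mul_le_mul_of_nonneg_left hint (sq_nonneg B)
        have hsum : B ^ 2 ≤ ∑ g ∈ msetSM n j,
            (∏ x, a (g x)) ^ 2 * (Matrix.of fun x b => mr x (g b)).det ^ 2 :=
          le_trans hterm (Finset.single_le_sum
            (f := fun g : Fin j → Fin n =>
              (∏ x, a (g x)) ^ 2 * (Matrix.of fun x b => mr x (g b)).det ^ 2)
            (fun g _ => by positivity) hg₀mem)
        calc B = Real.sqrt (B ^ 2) := (Real.sqrt_sq hBpos.le).symm
          _ ≤ _ := Real.sqrt_le_sqrt hsum
      have hrinv : (wedgeNorm v)⁻¹ ≤ B⁻¹ := by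
        rw [← one_div, ← one_div]
        exact one_div_le_one_div_of_le hBpos hWge
      refine hrinv.trans (le_csSup hSbdd ?_)
      refine ⟨Finset.univ.image g₀,
        ⟨g₀ ⟨0, hj1⟩, Finset.mem_image_of_mem g₀ (Finset.mem_univ _)⟩, ?_⟩
      rw [hB_def, Finset.prod_image (fun x _ y _ h => hg₀sm.injective h)]
    have hAne : A.Nonempty := hSne.mono hSsubA
    have hAbdd : BddAbove A := ⟨C, hAub⟩
    exact le_antisymm
      (csSup_le hSne fun r hr => le_csSup hAbdd (hSsubA hr))
      (csSup_le hAne hAub)
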